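/- For all 0 ≤ k ≤ n and d ≥ 1, the d-Hoggatt binomial coefficient ⟨n choose k⟩_d = ⟨n⟩_d! / (⟨k⟩_d! · ⟨n-k⟩_d!) equals ∏_{i=0}^{d-1} (i! · (n+i)!) / ((k+i)! · (n-k+i)!). -/

import Mathlib

/-- The n-th simplicial d-polytopic number ⟨n⟩_d = C(n+d-1, d). -/
def sp (d n : ℕ) : ℕ := Nat.choose (n + d - 1) d

/-- The d-simplitorial ⟨n⟩_d! = ∏_{k=1}^n ⟨k⟩_d, as a rational number. -/
def spFact (d n : ℕ) : ℚ := ∏ k ∈ Finset.Icc 1 n, (sp d k : ℚ)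

/-- The d-Hoggatt binomial coefficient ⟨n choose k⟩_d. -/
def hog (d n k : ℕ) : ℚ := spFact d n / (spFact d k * spFact d (n - k))

lemma prod_fact_ne (d : ℕ) (f : ℕ → ℕ) :
    (∏ i ∈ Finset.range d, ((f i).factorial : ℚ)) ≠ 0 :=
  Finset.prod_ne_zero_iff.2 fun i _ => Nat.cast_ne_zero.2 (Nat.factorial_ne_zero _)

lemma fact_prod_range (n d : ℕ) :
    (n.factorial : ℚ) * ∏ i ∈ Finset.range d, ((n + 1 + i : ℕ) : ℚ) =
      ((n + d).factorial : ℚ) := by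
  induction d with
  | zero => simp
  | succ d ih =>
      rw [Finset.prod_range_succ, ← mul_assoc, ih]
      have : (n + (d + 1)).factorial = (n + d + 1) * (n + d).factorial := by
        rw [← Nat.add_assoc]; exact Nat.factorial_succ _
      rw [this]
      push_cast
      ring

lemma spFact_key (d : ℕ) (hd : 1 ≤ d) (n : ℕ) :
    spFact d n * (d.factorial : ℚ) ^ n * ∏ i ∈ Finset.range d, (i.factorial : ℚ) =
      ∏ i ∈ Finset.range d, ((n + i).factorial : ℚ) := by
  induction n with
  | zero => simp [spFact]
  | succ n ih =>
      have h1 : spFact d (n + 1) = spFact d n * ((sp d (n + 1) : ℕ) : ℚ) := by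
        rw [spFact, Finset.prod_Icc_succ_top (by omega : 1 ≤ n + 1)]; rfl
      have hsp : ((sp d (n + 1) : ℕ) : ℚ) =
          ((n + d).factorial : ℚ) / ((d.factorial : ℚ) * (n.factorial : ℚ)) := by
        have hidx : n + 1 + d - 1 = n + d := by omega
        rw [sp, hidx, Nat.cast_choose ℚ (by omega : d ≤ n + d), Nat.add_sub_cancel]
      have hprod : ∏ i ∈ Finset.range d, ((n + 1 + i).factorial : ℚ) =
          (∏ i ∈ Finset.range d, ((n + i).factorial : ℚ)) *
            ∏ i ∈ Finset.range d, ((n + 1 + i : ℕ) : ℚ) := by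
        rw [← Finset.prod_mul_distrib]
        refine Finset.prod_congr rfl fun i _ => ?_
        have : (n + 1 + i).factorial = (n + 1 + i) * (n + i).factorial := by
          have : n + 1 + i = (n + i) + 1 := by omega
          rw [this, Nat.factorial_succ]
        rw [this]; push_cast; ring
      have hfd : (d.factorial : ℚ) ≠ 0 := Nat.cast_ne_zero.2 (Nat.factorial_ne_zero _)
      have hfn : (n.factorial : ℚ) ≠ 0 := Nat.cast_ne_zero.2 (Nat.factorial_ne_zero _)
      have hB := fact_prod_range n d
      have hB2 : (∏ i ∈ Finset.range d, ((n + 1 + i : ℕ) : ℚ)) =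
          ((n + d).factorial : ℚ) / (n.factorial : ℚ) := by
        rw [eq_div_iff hfn, mul_comm]; exact hB
      rw [h1, hsp, hprod, ← ih, hB2, pow_succ]
      field_simp

theorem hog_product_formula (d n k : ℕ) (hd : 1 ≤ d) (hk : k ≤ n) :
    hog d n k =
      ∏ i ∈ Finset.range d,
        ((Nat.factorial i : ℚ) * (Nat.factorial (n + i) : ℚ)) /
          ((Nat.factorial (k + i) : ℚ) * (Nat.factorial (n - k + i) : ℚ)) := by
  have hfd : (d.factorial : ℚ) ≠ 0 := Nat.cast_ne_zero.2 (Nat.factorial_ne_zero _)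
  have hA : (∏ i ∈ Finset.range d, (i.factorial : ℚ)) ≠ 0 := prod_fact_ne d id
  have hNk : (∏ i ∈ Finset.range d, ((k + i).factorial : ℚ)) ≠ 0 :=
    prod_fact_ne d (k + ·)
  have hNm : (∏ i ∈ Finset.range d, ((n - k + i).factorial : ℚ)) ≠ 0 :=
    prod_fact_ne d (n - k + ·)
  have hn := spFact_key d hd n
  have hk' := spFact_key d hd k
  have hm := spFact_key d hd (n - k)
  have hpow : (d.factorial : ℚ) ^ k * (d.factorial : ℚ) ^ (n - k) =
      (d.factorial : ℚ) ^ n := by rw [← pow_add]; congr 1; omega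
  -- rewrite RHS as ratio of products
  have hRHS : (∏ i ∈ Finset.range d,
        ((Nat.factorial i : ℚ) * (Nat.factorial (n + i) : ℚ)) /
          ((Nat.factorial (k + i) : ℚ) * (Nat.factorial (n - k + i) : ℚ))) =
      ((∏ i ∈ Finset.range d, (i.factorial : ℚ)) *
        ∏ i ∈ Finset.range d, ((n + i).factorial : ℚ)) /
      ((∏ i ∈ Finset.range d, ((k + i).factorial : ℚ)) *
        ∏ i ∈ Finset.range d, ((n - k + i).factorial : ℚ)) := by
    rw [Finset.prod_div_distrib, Finset.prod_mul_distrib, Finset.prod_mul_distrib]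
  rw [hRHS, hog]
  have hsFk : spFact d k ≠ 0 := by
    intro h
    apply hNk
    rw [← hk', h]; ring
  have hsFm : spFact d (n - k) ≠ 0 := by
    intro h
    apply hNm
    rw [← hm, h]; ring
  rw [div_eq_div_iff (by exact mul_ne_zero hsFk hsFm) (by exact mul_ne_zero hNk hNm)]
  rw [← hn, ← hk', ← hm]
  rw [← hpow]
  ring
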